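/- Let u and v be words with |v| < |u|, and let s be the maximal common suffix of the left-infinite words v^∞ and v^∞u. If |s| ≥ |v| + |u|, then u and v are powers of a common word. -/
import Mathlib


/-- The `k`-fold concatenation of the word `v` with itself. -/
def wpow {A : Type*} (v : List A) (k : ℕ) : List A := (List.replicate k v).flatten

/-- `s` is a (finite) suffix of the left-infinite word `x`, where `x n` denotes the
letter of `x` at distance `n` from the right end (`x 0` is the last letter). -/
def LSuffix {A : Type*} (s : List A) (x : ℕ → A) : Prop :=
  ∀ i, i < s.length → s.reverse[i]? = some (x i)

lemma wpow_length {A : Type*} (v : List A) (k : ℕ) : (wpow v k).length = k * v.length := by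
  simp [wpow]

lemma wpow_succ {A : Type*} (v : List A) (k : ℕ) : wpow v (k+1) = v ++ wpow v k := by
  simp [wpow, List.replicate_succ]

lemma wpow_succ' {A : Type*} (v : List A) (k : ℕ) : wpow v (k+1) = wpow v k ++ v := by
  simp [wpow, List.replicate_succ']

lemma wpow_reverse {A : Type*} (v : List A) (k : ℕ) :
    (wpow v k).reverse = wpow v.reverse k := by
  induction k with
  | zero => simp [wpow]
  | succ k ih => rw [wpow_succ, List.reverse_append, ih, ← wpow_succ']

lemma wpow_getElem? {A : Type*} (a : List A) :
    ∀ k i, i < k * a.length → (wpow a k)[i]? = a[i % a.length]? := by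
  intro k
  induction k with
  | zero => intro i h; simp at h
  | succ k ih =>
    intro i h
    rw [wpow_succ]
    by_cases hi : i < a.length
    · rw [List.getElem?_append_left hi, Nat.mod_eq_of_lt hi]
    · push_neg at hi
      rw [List.getElem?_append_right hi]
      have hlt : i - a.length < k * a.length := by
        have hsm : (k + 1) * a.length = k * a.length + a.length := by ring
        omega
      rw [ih (i - a.length) hlt]
      have h2 : i % a.length = (i - a.length) % a.length := by
        conv_lhs => rw [← Nat.sub_add_cancel hi]
        exact Nat.add_mod_right _ _
      rw [h2]

lemma period_mul {A : Type*} (x : ℕ → A) {p : ℕ} (h : ∀ i, x (i + p) = x i) :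
    ∀ m i, x (i + m * p) = x i := by
  intro m
  induction m with
  | zero => simp
  | succ m ih =>
    intro i
    have e : i + (m + 1) * p = (i + m * p) + p := by ring
    rw [e, h, ih]

lemma period_mod {A : Type*} (x : ℕ → A) {q : ℕ} (hq : 0 < q) (h : ∀ i, x (i + q) = x i)
    (j : ℕ) : x j = x (j % q) := by
  conv_lhs => rw [← Nat.mod_add_div j q]
  rw [Nat.mul_comm q (j / q)]
  exact period_mul x h (j / q) (j % q)

lemma period_gcd {A : Type*} (x : ℕ → A) :
    ∀ p q, (∀ i, x (i + p) = x i) → (∀ i, x (i + q) = x i) →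
      ∀ i, x (i + Nat.gcd p q) = x i := by
  intro p q
  induction p, q using Nat.gcd.induction with
  | H0 q => intro _ hq i; simpa using hq i
  | H1 p q hppos ih =>
    intro hp hq
    rw [Nat.gcd_rec]
    apply ih ?_ hp
    intro i
    have key := period_mul x hp (q / p) (i + q % p)
    have e : i + q % p + q / p * p = i + q := by
      have h1 := Nat.mod_add_div q p
      have h2 : q / p * p = p * (q / p) := Nat.mul_comm _ _
      omega
    rw [e] at key
    exact key.symm.trans (hq i)

/-- Let `|v| < |u|` and let `s` be the maximal common suffix of the left-infinite
words `v^∞` and `v^∞u`.  If `|s| ≥ |v| + |u|` then `u` and `v` are powers of a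
common word. -/
theorem long_common_suffix_implies_common_power {A : Type*} (u v s : List A)
    (hv : v ≠ []) (hlen : v.length < u.length)
    (x y : ℕ → A)
    -- `x` is the left-infinite word `v^∞`
    (hx : ∀ k : ℕ, LSuffix (wpow v k) x)
    -- `y` is the left-infinite word `v^∞ u`
    (hy : ∀ k : ℕ, LSuffix (wpow v k ++ u) y)
    -- `s` is the maximal common suffix of `x` and `y`
    (hsx : LSuffix s x) (hsy : LSuffix s y)
    (hmax : ∀ s' : List A, LSuffix s' x → LSuffix s' y → s'.length ≤ s.length)
    (hbig : v.length + u.length ≤ s.length) :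
    ∃ (w : List A) (t r : ℕ), 0 < t ∧ 0 < r ∧ u = wpow w t ∧ v = wpow w r := by
  set p := u.length with hpdef
  set q := v.length with hqdef
  have hq0 : 0 < q := List.length_pos_iff.mpr hv
  have hp0 : 0 < p := lt_trans hq0 hlen
  have hxw : ∀ k, ∀ i < k * q, (wpow v k).reverse[i]? = some (x i) := by
    intro k i hi
    exact hx k i (by rw [wpow_length]; exact hi)
  have hyw : ∀ k, ∀ i < k * q + p, (wpow v k ++ u).reverse[i]? = some (y i) := by
    intro k i hi
    refine hy k i ?_
    rw [List.length_append, wpow_length]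
    exact hi
  -- x has period q
  have hperq : ∀ i, x (i + q) = x i := by
    intro i
    have hi1 : i < (i + 1) * q := by
      have := Nat.le_mul_of_pos_right (i + 1) hq0
      omega
    have hi2 : i + q < (i + 2) * q := by
      have h1 : (i + 2) * q = (i + 1) * q + q := by ring
      omega
    have h1 := hxw (i + 1) i hi1
    have h2 := hxw (i + 2) (i + q) hi2
    rw [wpow_succ', List.reverse_append] at h2
    rw [List.getElem?_append_right (by rw [List.length_reverse]; omega)] at h2
    rw [List.length_reverse] at h2
    have e : i + q - q = i := by omega
    rw [e] at h2
    exact (Option.some.inj (h1.symm.trans h2)).symm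
  -- y shifted by p is x
  have hyx : ∀ i, y (i + p) = x i := by
    intro i
    have hi1 : i < (i + 1) * q := by
      have := Nat.le_mul_of_pos_right (i + 1) hq0
      omega
    have h1 := hxw (i + 1) i hi1
    have h2 := hyw (i + 1) (i + p) (by omega)
    rw [List.reverse_append] at h2
    rw [List.getElem?_append_right (by rw [List.length_reverse]; omega)] at h2
    rw [List.length_reverse] at h2
    have e : i + p - p = i := by omega
    rw [e] at h2
    exact (Option.some.inj (h1.symm.trans h2)).symm
  -- x and y agree up to |s|
  have hxy : ∀ i < s.length, x i = y i := by
    intro i hi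
    exact Option.some.inj ((hsx i hi).symm.trans (hsy i hi))
  -- x has period p on the first q positions
  have hpq : ∀ i < q, x (i + p) = x i := by
    intro i hi
    have h := hxy (i + p) (by omega)
    rw [h, hyx]
  have hmodq := period_mod x hq0 hperq
  -- x has period p everywhere
  have hperp : ∀ i, x (i + p) = x i := by
    intro i
    have e : i + p = (i % q + p) + i / q * q := by
      have h1 := Nat.mod_add_div i q
      have h2 : q * (i / q) = i / q * q := Nat.mul_comm _ _
      omega
    rw [e, period_mul x hperq, hpq _ (Nat.mod_lt i hq0)]
    exact (hmodq i).symm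
  set d := Nat.gcd p q with hddef
  have hd0 : 0 < d := Nat.gcd_pos_of_pos_left q hp0
  have hperd : ∀ i, x (i + d) = x i := period_gcd x p q hperp hperq
  have hmodd := period_mod x hd0 hperd
  set w : List A := (List.ofFn fun i : Fin d => x i).reverse with hwdef
  have hwrev : w.reverse = List.ofFn fun i : Fin d => x i := List.reverse_reverse _
  have hwlen : w.length = d := by simp [hwdef]
  -- any suffix of x whose length is divisible by d is a power of w
  have hz : ∀ z : List A, (∀ i < z.length, z.reverse[i]? = some (x i)) →
      d ∣ z.length → z = wpow w (z.length / d) := by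
    rintro z hzs ⟨m, hm⟩
    have hmq : z.length / d = m := by rw [hm, Nat.mul_div_cancel_left m hd0]
    rw [hmq]
    apply List.reverse_injective
    rw [wpow_reverse, hwrev]
    apply List.ext_getElem?
    intro i
    by_cases hi : i < z.length
    · rw [hzs i hi]
      have hilt : i < m * (List.ofFn fun i : Fin d => x i).length := by
        rw [List.length_ofFn]
        have hcomm : m * d = d * m := Nat.mul_comm m d
        omega
      rw [wpow_getElem? _ m i hilt]
      rw [List.length_ofFn]
      have him : i % d < d := Nat.mod_lt _ hd0
      rw [List.getElem?_ofFn]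
      simp only [List.ofFnNthVal, him, dif_pos]
      exact congrArg some (hmodd i)
    · push_neg at hi
      rw [List.getElem?_eq_none (by rw [List.length_reverse]; exact hi),
        List.getElem?_eq_none (by
          rw [wpow_length, List.length_ofFn]
          have hcomm : m * d = d * m := Nat.mul_comm m d
          omega)]
  have hdp : d ∣ p := Nat.gcd_dvd_left p q
  have hdq : d ∣ q := Nat.gcd_dvd_right p q
  -- u is a suffix of x
  have hu : ∀ i < u.length, u.reverse[i]? = some (x i) := by
    intro i hi
    have h0 : LSuffix u y := by
      have := hy 0
      simpa [wpow] using this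
    have h1 := h0 i hi
    rw [← hxy i (by omega)] at h1
    exact h1
  -- v is a suffix of x
  have hvx : ∀ i < v.length, v.reverse[i]? = some (x i) := by
    intro i hi
    have h1 : LSuffix v x := by
      have := hx 1
      simpa [wpow] using this
    exact h1 i hi
  refine ⟨w, p / d, q / d, Nat.div_pos (Nat.le_of_dvd hp0 hdp) hd0,
    Nat.div_pos (Nat.le_of_dvd hq0 hdq) hd0, ?_, ?_⟩
  · exact hz u hu hdp
  · exact hz v hvx hdq
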